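/- arXiv:1503.02323 — 2 statements merged into one kernel-verified Lean document; each statement's English description precedes it below -/
import Mathlib

section
/- Let K be a field and 𝕐 ⊆ ℙ^{s−1}. The graded vanishing ideal I(𝕐) is a binomial ideal if and only if V(I(𝕐)) ∪ {[0]} is a submonoid of ℙ^{s−1} ∪ {[0]} under componentwise multiplication. -/
open MvPolynomial

noncomputable section

variable {K : Type} [Field K] {s : ℕ}

def IsBinomialIdeal {σ : Type} (I : Ideal (MvPolynomial σ K)) : Prop :=
  ∃ B : Set (MvPolynomial σ K),
    (∀ f ∈ B, ∃ a b : σ →₀ ℕ, f = monomial a 1 - monomial b 1) ∧ I = Ideal.span B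

def affineVanishingIdeal (Y : Set (Fin s → K)) : Ideal (MvPolynomial (Fin s) K) :=
  Ideal.span {f | ∀ α ∈ Y, eval α f = 0}

def affineZeroSet (I : Ideal (MvPolynomial (Fin s) K)) : Set (Fin s → K) :=
  {α | ∀ f ∈ I, eval α f = 0}

def projVanishingIdeal (Y : Set (Projectivization K (Fin s → K))) :
    Ideal (MvPolynomial (Fin s) K) :=
  Ideal.span {f | (∃ n, f.IsHomogeneous n) ∧
    ∀ (α : Fin s → K) (hα : α ≠ 0), Projectivization.mk K α hα ∈ Y → eval α f = 0}

def projZeroSet (I : Ideal (MvPolynomial (Fin s) K)) :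
    Set (Projectivization K (Fin s → K)) :=
  {p | ∀ f ∈ I, (∃ n, f.IsHomogeneous n) →
    ∀ (α : Fin s → K) (hα : α ≠ 0), Projectivization.mk K α hα = p → eval α f = 0}

def IsProjSubmonoid (Y : Set (Projectivization K (Fin s → K))) : Prop :=
  (∀ h1 : (1 : Fin s → K) ≠ 0, Projectivization.mk K 1 h1 ∈ Y) ∧
  ∀ (α β : Fin s → K) (hα : α ≠ 0) (hβ : β ≠ 0),
    Projectivization.mk K α hα ∈ Y → Projectivization.mk K β hβ ∈ Y →
    ∀ hab : α * β ≠ 0, Projectivization.mk K (α * β) hab ∈ Y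

def projTorus (K : Type) [Field K] (s : ℕ) : Set (Projectivization K (Fin s → K)) :=
  {p | ∀ (α : Fin s → K) (hα : α ≠ 0), Projectivization.mk K α hα = p → ∀ i, α i ≠ 0}

def IsTorusSubgroup (Y : Set (Projectivization K (Fin s → K))) : Prop :=
  Y ⊆ projTorus K s ∧ IsProjSubmonoid Y ∧
  ∀ (α : Fin s → K) (hα : α ≠ 0), Projectivization.mk K α hα ∈ Y →
    ∀ hinv : α⁻¹ ≠ 0, Projectivization.mk K α⁻¹ hinv ∈ Y

def IsLatticeIdeal (I : Ideal (MvPolynomial (Fin s) K)) : Prop :=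
  IsBinomialIdeal I ∧ ∀ (i : Fin s) (f : MvPolynomial (Fin s) K), X i * f ∈ I → f ∈ I

def IsGradedIdeal {σ : Type} (I : Ideal (MvPolynomial σ K)) : Prop :=
  ∀ f ∈ I, ∀ n, homogeneousComponent n f ∈ I

/-! ### Auxiliary lemmas -/

attribute [local instance] MvPolynomial.gradedAlgebra

lemma eval_monomial_one (γ : Fin s → K) (a : Fin s →₀ ℕ) :
    eval γ (monomial a (1 : K)) = ∏ i, γ i ^ a i := by
  rw [eval_monomial, one_mul, Finsupp.prod_pow]

lemma eval_pvi_zero {Y : Set (Projectivization K (Fin s → K))}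
    {f : MvPolynomial (Fin s) K} (hf : f ∈ projVanishingIdeal Y)
    {α : Fin s → K} (hα : α ≠ 0) (hmem : Projectivization.mk K α hα ∈ Y) :
    eval α f = 0 := by
  have h : projVanishingIdeal Y ≤ RingHom.ker (eval α) := by
    rw [projVanishingIdeal, Ideal.span_le]
    rintro g ⟨-, hg⟩
    exact hg α hα hmem
  exact h hf

lemma mem_projZeroSet_of_mem {Y : Set (Projectivization K (Fin s → K))}
    {p : Projectivization K (Fin s → K)} (hp : p ∈ Y) :
    p ∈ projZeroSet (projVanishingIdeal Y) := by
  intro f hf _ α hα hmk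
  exact eval_pvi_zero hf hα (hmk ▸ hp)

lemma pvi_graded (Y : Set (Projectivization K (Fin s → K)))
    {f : MvPolynomial (Fin s) K} (hf : f ∈ projVanishingIdeal Y) (n : ℕ) :
    homogeneousComponent n f ∈ projVanishingIdeal Y := by
  have hI : Ideal.IsHomogeneous (homogeneousSubmodule (Fin s) K) (projVanishingIdeal Y) := by
    apply Ideal.homogeneous_span
    rintro x ⟨⟨m, hm⟩, -⟩
    exact ⟨m, hm⟩
  have h := hI n hf
  have h2 : ((DirectSum.decompose (homogeneousSubmodule (Fin s) K) f n : _) :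
      MvPolynomial (Fin s) K) = homogeneousComponent n f :=
    MvPolynomial.decomposition.decompose'_apply f n
  rwa [h2] at h

lemma eval_smul_homog {f : MvPolynomial (Fin s) K} {n : ℕ} (hf : f.IsHomogeneous n)
    (c : K) (x : Fin s → K) : eval (c • x) f = c ^ n * eval x f := by
  rw [eval_eq', eval_eq', Finset.mul_sum]
  refine Finset.sum_congr rfl fun a ha => ?_
  have hdeg : a.degree = n := by
    rw [Finsupp.degree_eq_weight_one]
    exact hf (mem_support_iff.mp ha)
  have h1 : ∏ i, (c • x) i ^ a i = c ^ n * ∏ i, x i ^ a i := by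
    have : ∀ i, (c • x) i ^ a i = c ^ a i * x i ^ a i := fun i => by
      simp [mul_pow]
    rw [Finset.prod_congr rfl fun i _ => this i, Finset.prod_mul_distrib,
      Finset.prod_pow_eq_pow_sum]
    congr 2
    rw [← hdeg, Finsupp.degree]
    exact (Finset.sum_subset (Finset.subset_univ _) (fun i _ hi => by
      simpa using Finsupp.notMem_support_iff.mp hi)).symm
  rw [h1]; ring


lemma key_span (hs : 0 < s) (Y : Set (Projectivization K (Fin s → K)))
    (hsub : IsProjSubmonoid (projZeroSet (projVanishingIdeal Y))) :
    ∀ N (f : MvPolynomial (Fin s) K), f.support.card ≤ N →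
      (∃ d, f.IsHomogeneous d) →
      (∀ (γ : Fin s → K) (hγ : γ ≠ 0),
          Projectivization.mk K γ hγ ∈ projZeroSet (projVanishingIdeal Y) → eval γ f = 0) →
      f ∈ Ideal.span {g : MvPolynomial (Fin s) K |
        (∃ a b : Fin s →₀ ℕ, g = monomial a 1 - monomial b 1) ∧ g ∈ projVanishingIdeal Y} := by
  have hone : (1 : Fin s → K) ≠ 0 := by
    intro h
    have := congrFun h ⟨0, hs⟩
    simp at this
  set V := projZeroSet (projVanishingIdeal Y) with hVdef
  let Cmon : Submonoid (Fin s → K) :=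
  { carrier := {γ | γ = 0 ∨ ∃ h : γ ≠ 0, Projectivization.mk K γ h ∈ V}
    one_mem' := Or.inr ⟨hone, hsub.1 hone⟩
    mul_mem' := by
      rintro γ δ (rfl | ⟨hγ, hγV⟩) hδ
      · exact Or.inl (zero_mul δ)
      rcases hδ with rfl | ⟨hδ, hδV⟩
      · exact Or.inl (mul_zero γ)
      by_cases h : γ * δ = 0
      · exact Or.inl h
      · exact Or.inr ⟨h, hsub.2 γ δ hγ hδ hγV hδV h⟩ }
  let χ : (Fin s →₀ ℕ) → (Cmon →* K) := fun a =>
  { toFun := fun γ => ∏ i, (γ : Fin s → K) i ^ a i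
    map_one' := by simp
    map_mul' := by
      intro γ δ
      simp only [Submonoid.coe_mul, Pi.mul_apply, mul_pow]
      exact Finset.prod_mul_distrib }
  intro N
  induction N with
  | zero =>
    intro f hcard _ _
    have hf0 : f = 0 := by
      by_contra h
      obtain ⟨a, ha⟩ := support_nonempty.mpr h
      have := Finset.card_pos.mpr ⟨a, ha⟩
      omega
    simp [hf0]
  | succ N ih =>
    intro f hcard hhom hvan
    by_cases hf0 : f = 0
    · simp [hf0]
    obtain ⟨d, hd⟩ := hhom
    have hdeg : ∀ a ∈ f.support, a.degree = d := fun a ha => by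
      rw [Finsupp.degree_eq_weight_one]
      exact hd (mem_support_iff.mp ha)
    have hvan1 : eval (1 : Fin s → K) f = 0 := hvan 1 hone (hsub.1 hone)
    have hd0 : d ≠ 0 := by
      rintro rfl
      obtain ⟨a, ha⟩ := support_nonempty.mpr hf0
      have ha0 : a = 0 := (Finsupp.degree_eq_zero_iff a).mp (hdeg a ha)
      subst ha0
      have hsup : f.support = {0} := by
        apply Finset.eq_singleton_iff_unique_mem.mpr
        exact ⟨ha, fun b hb => (Finsupp.degree_eq_zero_iff b).mp (hdeg b hb)⟩
      rw [eval_eq', hsup, Finset.sum_singleton] at hvan1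
      simp at hvan1
      exact mem_support_iff.mp ha hvan1
    have hna : ∀ a ∈ f.support, ∃ i, a i ≠ 0 := by
      intro a ha
      by_contra h
      push_neg at h
      have ha0 : a = 0 := Finsupp.ext fun i => h i
      exact hd0 (by rw [← hdeg a ha, ha0, map_zero])
    -- the linear relation among the characters
    have hrel : ∑ a ∈ f.support.attach,
        coeff (a : Fin s →₀ ℕ) f • ((χ (a : Fin s →₀ ℕ) : Cmon →* K) : Cmon → K) = 0 := by
      funext γ
      simp only [Finset.sum_apply, Pi.smul_apply, smul_eq_mul, Pi.zero_apply]
      have hval : ∀ a : Fin s →₀ ℕ, (χ a : Cmon →* K) γ = ∏ i, (γ : Fin s → K) i ^ a i :=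
        fun a => rfl
      rcases γ.2 with h0 | ⟨hγ, hγV⟩
      · apply Finset.sum_eq_zero
        rintro ⟨a, ha⟩ -
        obtain ⟨i, hi⟩ := hna a ha
        rw [hval]
        rw [Finset.prod_eq_zero (Finset.mem_univ i)
          (by rw [show (γ : Fin s → K) i = 0 from by rw [h0]; rfl]; exact zero_pow hi)]
        ring
      · have hev := hvan (γ : Fin s → K) hγ hγV
        rw [eval_eq'] at hev
        calc ∑ a ∈ f.support.attach,
              coeff (a : Fin s →₀ ℕ) f * (χ (a : Fin s →₀ ℕ) : Cmon →* K) γ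
            = ∑ a ∈ f.support, coeff a f * ∏ i, (γ : Fin s → K) i ^ a i := by
              rw [← Finset.sum_attach f.support
                (fun a => coeff a f * ∏ i, (γ : Fin s → K) i ^ a i)]
              rfl
          _ = 0 := hev
    by_cases hinj : Function.Injective fun a : f.support => χ (a : Fin s →₀ ℕ)
    · exfalso
      have hli : LinearIndependent K
          fun a : f.support => ((χ (a : Fin s →₀ ℕ) : Cmon →* K) : Cmon → K) :=
        (linearIndependent_monoidHom Cmon K).comp _ hinj
      obtain ⟨a, ha⟩ := support_nonempty.mpr hf0
      have hz := Fintype.linearIndependent_iff.mp hli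
        (fun a => coeff (a : Fin s →₀ ℕ) f)
        (by rw [Finset.univ_eq_attach]; exact hrel) ⟨a, ha⟩
      exact mem_support_iff.mp ha hz
    · obtain ⟨a, b, hab, hne⟩ := Function.not_injective_iff.mp hinj
      have haS : (a : Fin s →₀ ℕ) ∈ f.support := a.2
      have hbS : (b : Fin s →₀ ℕ) ∈ f.support := b.2
      have hba : (b : Fin s →₀ ℕ) ≠ (a : Fin s →₀ ℕ) := by
        intro h
        exact hne (Subtype.ext h.symm)
      set b0 : MvPolynomial (Fin s) K :=
        monomial (a : Fin s →₀ ℕ) 1 - monomial (b : Fin s →₀ ℕ) 1 with hb0def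
      have hb0V : ∀ (γ : Fin s → K) (hγ : γ ≠ 0),
          Projectivization.mk K γ hγ ∈ V → eval γ b0 = 0 := by
        intro γ hγ hγV
        have h := DFunLike.congr_fun hab (⟨γ, Or.inr ⟨hγ, hγV⟩⟩ : Cmon)
        rw [hb0def, map_sub, eval_monomial_one, eval_monomial_one]
        exact sub_eq_zero.mpr h
      have hb0hom : b0.IsHomogeneous d := by
        have h1 : (monomial (a : Fin s →₀ ℕ) (1 : K)).IsHomogeneous d :=
          isHomogeneous_monomial 1 (hdeg _ haS)
        have h2 : (monomial (b : Fin s →₀ ℕ) (1 : K)).IsHomogeneous d :=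
          isHomogeneous_monomial 1 (hdeg _ hbS)
        exact Submodule.sub_mem (homogeneousSubmodule (Fin s) K d) h1 h2
      have hb0I : b0 ∈ projVanishingIdeal Y := by
        apply Ideal.subset_span
        exact ⟨⟨d, hb0hom⟩, fun γ hγ hγY => hb0V γ hγ (mem_projZeroSet_of_mem hγY)⟩
      set c := coeff (a : Fin s →₀ ℕ) f with hc
      set g := f - c • b0 with hgdef
      have hgsup : g.support ⊆ f.support.erase (a : Fin s →₀ ℕ) := by
        intro e he
        rw [Finset.mem_erase]
        have hce : coeff e g ≠ 0 := mem_support_iff.mp he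
        constructor
        · rintro rfl
          apply hce
          rw [hgdef, hb0def]
          simp [coeff_sub, coeff_smul, coeff_monomial, if_neg hba, hne.symm, hc]
        · by_cases hef : e ∈ f.support
          · exact hef
          · exfalso
            apply hce
            have hcef : coeff e f = 0 := notMem_support_iff.mp hef
            have hea : (a : Fin s →₀ ℕ) ≠ e := fun h => hef (h ▸ haS)
            have heb : (b : Fin s →₀ ℕ) ≠ e := fun h => hef (h ▸ hbS)
            rw [hgdef, hb0def]
            simp [coeff_sub, coeff_smul, coeff_monomial, if_neg hea, if_neg heb, hcef]
      have hgcard : g.support.card ≤ N := by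
        have h1 := Finset.card_le_card hgsup
        rw [Finset.card_erase_of_mem haS] at h1
        omega
      have hghom : g.IsHomogeneous d :=
        Submodule.sub_mem (homogeneousSubmodule (Fin s) K d) hd
          (Submodule.smul_mem _ c hb0hom)
      have hgvan : ∀ (γ : Fin s → K) (hγ : γ ≠ 0),
          Projectivization.mk K γ hγ ∈ V → eval γ g = 0 := by
        intro γ hγ hγV
        rw [hgdef, map_sub, smul_eval, hvan γ hγ hγV, hb0V γ hγ hγV]
        ring
      have hgmem := ih g hgcard ⟨d, hghom⟩ hgvan
      have hfeq : f = g + C c * b0 := by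
        rw [hgdef, smul_eq_C_mul]
        ring
      rw [hfeq]
      exact Ideal.add_mem _ hgmem
        (Ideal.mul_mem_left _ _ (Ideal.subset_span ⟨⟨_, _, rfl⟩, hb0I⟩))

theorem classification_binomial (hs : 0 < s)
    (Y : Set (Projectivization K (Fin s → K))) :
    IsBinomialIdeal (projVanishingIdeal Y) ↔
      IsProjSubmonoid (projZeroSet (projVanishingIdeal Y)) := by
  constructor
  · rintro ⟨B, hB, hIB⟩
    have hsplit : ∀ (α β : Fin s → K) (e : Fin s →₀ ℕ),
        ∏ i, (α * β) i ^ e i = (∏ i, α i ^ e i) * ∏ i, β i ^ e i := by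
      intro α β e
      simp only [Pi.mul_apply, mul_pow]
      exact Finset.prod_mul_distrib
    constructor
    · intro h1 f hf hhom α hα hmk
      obtain ⟨n, hn⟩ := hhom
      obtain ⟨c, hc⟩ := (Projectivization.mk_eq_mk_iff K α 1 hα h1).mp hmk
      have hker : eval (1 : Fin s → K) f = 0 := by
        have hle : Ideal.span B ≤ RingHom.ker (eval (1 : Fin s → K)) := by
          rw [Ideal.span_le]
          intro g hg
          obtain ⟨a, b, rfl⟩ := hB g hg
          rw [SetLike.mem_coe, RingHom.mem_ker, map_sub, eval_monomial_one, eval_monomial_one]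
          simp
        exact hle (hIB ▸ hf)
      rw [← hc, Units.smul_def, eval_smul_homog hn, hker, mul_zero]
    · intro α β hα hβ hmα hmβ hab f hf hhom γ hγ hmk
      obtain ⟨n, hn⟩ := hhom
      obtain ⟨c, hc⟩ := (Projectivization.mk_eq_mk_iff K γ (α * β) hγ hab).mp hmk
      have hkey : eval (α * β) f = 0 := by
        have hle : Ideal.span B ≤ RingHom.ker (eval (α * β)) := by
          rw [Ideal.span_le]
          intro g hg
          obtain ⟨a, b, rfl⟩ := hB g hg
          have hgI : (monomial a 1 - monomial b 1 : MvPolynomial (Fin s) K) ∈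
              projVanishingIdeal Y := by
            rw [hIB]; exact Ideal.subset_span hg
          rw [SetLike.mem_coe, RingHom.mem_ker, map_sub, eval_monomial_one, eval_monomial_one]
          by_cases hdab : a.degree = b.degree
          · have hhomg : (monomial a (1 : K) - monomial b 1).IsHomogeneous a.degree :=
              Submodule.sub_mem (homogeneousSubmodule (Fin s) K a.degree)
                (isHomogeneous_monomial 1 rfl) (isHomogeneous_monomial 1 hdab.symm)
            have h1 := hmα _ hgI ⟨_, hhomg⟩ α hα rfl
            have h2 := hmβ _ hgI ⟨_, hhomg⟩ β hβ rfl
            rw [map_sub, eval_monomial_one, eval_monomial_one, sub_eq_zero] at h1 h2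
            rw [hsplit, hsplit, h1, h2, sub_self]
          · have hma : (monomial a (1 : K)) ∈ projVanishingIdeal Y := by
              have h := pvi_graded Y hgI a.degree
              rwa [map_sub,
                homogeneousComponent_of_mem ((mem_homogeneousSubmodule _ _).mpr
                  (isHomogeneous_monomial 1 rfl)), if_pos rfl,
                homogeneousComponent_of_mem ((mem_homogeneousSubmodule _ _).mpr
                  (isHomogeneous_monomial (1 : K) rfl)), if_neg hdab, sub_zero] at h
            have hmb : (monomial b (1 : K)) ∈ projVanishingIdeal Y := by
              have h := pvi_graded Y hgI b.degree
              rwa [map_sub,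
                homogeneousComponent_of_mem ((mem_homogeneousSubmodule _ _).mpr
                  (isHomogeneous_monomial (1 : K) rfl)),
                if_neg (fun hh => hdab hh.symm),
                homogeneousComponent_of_mem ((mem_homogeneousSubmodule _ _).mpr
                  (isHomogeneous_monomial (1 : K) rfl)), if_pos rfl, zero_sub,
                neg_mem_iff] at h
            have h1 := hmα _ hma ⟨_, isHomogeneous_monomial 1 rfl⟩ α hα rfl
            have h2 := hmα _ hmb ⟨_, isHomogeneous_monomial 1 rfl⟩ α hα rfl
            rw [eval_monomial_one] at h1 h2
            rw [hsplit, hsplit, h1, h2]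
            ring
        exact hle (hIB ▸ hf)
      rw [← hc, Units.smul_def, eval_smul_homog hn, hkey, mul_zero]
  · intro hsub
    refine ⟨{g | (∃ a b : Fin s →₀ ℕ, g = monomial a 1 - monomial b 1) ∧
        g ∈ projVanishingIdeal Y}, fun g hg => hg.1, le_antisymm ?_ ?_⟩
    · conv_lhs => rw [projVanishingIdeal]
      rw [Ideal.span_le]
      rintro f ⟨⟨n, hn⟩, hvanY⟩
      apply key_span hs Y hsub f.support.card f le_rfl ⟨n, hn⟩
      intro γ hγ hγV
      exact hγV f (Ideal.subset_span ⟨⟨n, hn⟩, hvanY⟩) ⟨n, hn⟩ γ hγ rfl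
    · exact Ideal.span_le.mpr fun g hg => hg.2
end
end

section
/- Let 𝕐 ⊆ ℙ^{s−1} with dim(S/I(𝕐)) = 1 (Krull dimension). Then I(𝕐) is a binomial ideal if and only if 𝕐 ∪ {[0]} is a submonoid of ℙ^{s−1} ∪ {[0]} under componentwise multiplication. -/
open MvPolynomial

noncomputable section

variable {K : Type} [Field K] {s : ℕ}

/-! ### Auxiliary lemmas -/

lemma aux_eval_monomial_one (α : Fin s → K) (a : Fin s →₀ ℕ) :
    eval α (monomial a (1 : K)) = ∏ i, α i ^ a i := by
  rw [eval_monomial, one_mul, Finsupp.prod_pow]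

lemma aux_eval_monomial_mul (α β : Fin s → K) (a : Fin s →₀ ℕ) :
    eval (α * β) (monomial a (1 : K)) =
      eval α (monomial a (1 : K)) * eval β (monomial a (1 : K)) := by
  simp only [aux_eval_monomial_one, Pi.mul_apply, mul_pow, Finset.prod_mul_distrib]

lemma aux_support_degree {f : MvPolynomial (Fin s) K} {n : ℕ} (hf : f.IsHomogeneous n)
    {d : Fin s →₀ ℕ} (hd : d ∈ f.support) : ∑ i, d i = n := by
  have h1 : d.degree = n := by
    by_contra h
    exact mem_support_iff.mp hd (hf.coeff_eq_zero h)
  rw [← h1, Finsupp.degree]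
  exact (Finset.sum_subset (Finset.subset_univ _)
    (fun i _ hi => Finsupp.notMem_support_iff.mp hi)).symm

lemma aux_eval_smul {f : MvPolynomial (Fin s) K} {n : ℕ} (hf : f.IsHomogeneous n)
    (c : K) (α : Fin s → K) : eval (c • α) f = c ^ n * eval α f := by
  rw [eval_eq', eval_eq', Finset.mul_sum]
  refine Finset.sum_congr rfl fun d hd => ?_
  have : ∏ i, (c • α) i ^ d i = c ^ n * ∏ i, α i ^ d i := by
    simp only [Pi.smul_apply, smul_eq_mul, mul_pow, Finset.prod_mul_distrib,
      Finset.prod_pow_eq_pow_sum]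
    rw [aux_support_degree hf hd]
  rw [this]; ring

def auxL (c : Fin s → K) : MvPolynomial (Fin s) K := ∑ i, C (c i) * X i

lemma auxL_eval (c α : Fin s → K) : eval α (auxL c) = ∑ i, c i * α i := by simp [auxL]

lemma auxL_homog (c : Fin s → K) : (auxL c).IsHomogeneous 1 :=
  IsHomogeneous.sum _ _ _ fun i _ => isHomogeneous_C_mul_X (c i) i

lemma aux_sep {α β : Fin s → K} (hα : α ≠ 0) (hβ : β ≠ 0)
    (hne : Projectivization.mk K α hα ≠ Projectivization.mk K β hβ) :
    ∃ c : Fin s → K, (∑ i, c i * α i) = 0 ∧ (∑ i, c i * β i) ≠ 0 := by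
  by_contra h
  push_neg at h
  obtain ⟨j, hj⟩ := Function.ne_iff.mp hα
  have hj : α j ≠ 0 := hj
  have key : ∀ i, α j * β i = α i * β j := by
    intro i
    have h0 : (∑ k, (α j * (if k = i then 1 else 0) - α i * (if k = j then 1 else 0)) * α k) = 0 := by
      simp only [sub_mul, mul_assoc, ite_mul, one_mul, zero_mul, mul_ite, mul_zero,
        Finset.sum_sub_distrib, Finset.sum_ite_eq', Finset.mem_univ, if_true]
      ring
    have h1 := h _ h0
    simp only [sub_mul, mul_assoc, ite_mul, one_mul, zero_mul, mul_ite, mul_zero,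
      Finset.sum_sub_distrib, Finset.sum_ite_eq', Finset.mem_univ, if_true] at h1
    exact sub_eq_zero.mp h1
  obtain ⟨t, ht, hβα⟩ : ∃ t : K, t ≠ 0 ∧ β = t • α := by
    refine ⟨β j * (α j)⁻¹, ?_, ?_⟩
    · intro h0
      have hb : β = (β j * (α j)⁻¹) • α := by
        funext i
        have := key i
        rw [Pi.smul_apply, smul_eq_mul, mul_right_comm, eq_mul_inv_iff_mul_eq₀ hj]
        calc β i * α j = α j * β i := by ring
        _ = α i * β j := this
        _ = β j * α i := by ring
      rw [h0, zero_smul] at hb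
      exact hβ hb
    · funext i
      have := key i
      rw [Pi.smul_apply, smul_eq_mul, mul_right_comm, eq_mul_inv_iff_mul_eq₀ hj]
      calc β i * α j = α j * β i := by ring
      _ = α i * β j := this
      _ = β j * α i := by ring
  exact hne ((Projectivization.mk_eq_mk_iff' K α β hα hβ).mpr
    ⟨t⁻¹, by rw [hβα, smul_smul, inv_mul_cancel₀ ht, one_smul]⟩)

lemma aux_vanish {Y : Set (Projectivization K (Fin s → K))} {α : Fin s → K} (hα : α ≠ 0)
    (hmem : Projectivization.mk K α hα ∈ Y) :
    ∀ f ∈ projVanishingIdeal Y, eval α f = 0 := by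
  intro f hf
  have hle : projVanishingIdeal Y ≤ RingHom.ker (eval α) := by
    rw [projVanishingIdeal, Ideal.span_le]
    intro g hg
    exact hg.2 α hα hmem
  exact hle hf

lemma aux_nss {Y : Set (Projectivization K (Fin s → K))} (hY : Y.Finite)
    {γ : Fin s → K} (hγ : γ ≠ 0) (hout : Projectivization.mk K γ hγ ∉ Y) :
    ∃ f : MvPolynomial (Fin s) K, (∃ n, f.IsHomogeneous n) ∧
      (∀ (α : Fin s → K) (hα : α ≠ 0), Projectivization.mk K α hα ∈ Y → eval α f = 0) ∧
      eval γ f ≠ 0 := by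
  classical
  have hc : ∀ p : Projectivization K (Fin s → K),
      ∃ c : Fin s → K, p ∈ Y →
        ((∑ i, c i * p.rep i) = 0 ∧ (∑ i, c i * γ i) ≠ 0) := by
    intro p
    by_cases hp : p ∈ Y
    · obtain ⟨c, h1, h2⟩ := aux_sep p.rep_nonzero hγ (by
        rw [Projectivization.mk_rep]; intro h; exact hout (h ▸ hp))
      exact ⟨c, fun _ => ⟨h1, h2⟩⟩
    · exact ⟨0, fun hmem => absurd hmem hp⟩
  choose c hcY using hc
  refine ⟨∏ p ∈ hY.toFinset, auxL (c p), ?_, ?_, ?_⟩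
  · exact ⟨∑ _p ∈ hY.toFinset, 1, IsHomogeneous.prod _ _ _ fun p _ => auxL_homog _⟩
  · intro α hα hmem
    rw [map_prod]
    set p := Projectivization.mk K α hα with hp
    refine Finset.prod_eq_zero (i := p) (hY.mem_toFinset.mpr hmem) ?_
    obtain ⟨t, htα⟩ := (Projectivization.mk_eq_mk_iff' K α p.rep hα p.rep_nonzero).mp
      (by rw [Projectivization.mk_rep])
    rw [auxL_eval, ← htα]
    have : (∑ i, c p i * (t • p.rep) i) = t * ∑ i, c p i * p.rep i := by
      rw [Finset.mul_sum]
      refine Finset.sum_congr rfl fun i _ => ?_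
      simp only [Pi.smul_apply, smul_eq_mul]; ring
    rw [this, (hcY p hmem).1, mul_zero]
  · rw [map_prod]
    refine Finset.prod_ne_zero_iff.mpr fun p hpT => ?_
    rw [auxL_eval]
    exact (hcY p (hY.mem_toFinset.mp hpT)).2

def auxPsi (α : Fin s → K) : MvPolynomial (Fin s) K →+* Polynomial K :=
  eval₂Hom Polynomial.C (fun i => Polynomial.C (α i) * Polynomial.X)

lemma auxPsi_homog {f : MvPolynomial (Fin s) K} {n : ℕ} (hf : f.IsHomogeneous n)
    (α : Fin s → K) : auxPsi α f = Polynomial.C (eval α f) * Polynomial.X ^ n := by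
  show eval₂ Polynomial.C (fun i => Polynomial.C (α i) * Polynomial.X) f = _
  rw [eval₂_eq', eval_eq']
  rw [map_sum, Finset.sum_mul]
  refine Finset.sum_congr rfl fun d hd => ?_
  have h1 : ∏ i, (Polynomial.C (α i) * Polynomial.X) ^ d i
      = Polynomial.C (∏ i, α i ^ d i) * Polynomial.X ^ n := by
    simp only [mul_pow, Finset.prod_mul_distrib, Finset.prod_pow_eq_pow_sum,
      ← map_pow, ← map_prod]
    rw [aux_support_degree hf hd]
  rw [h1, map_mul, mul_assoc]

lemma aux_chain {R : Type*} [CommRing R] {I q0 q1 q2 : Ideal R}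
    (h0 : q0.IsPrime) (h1 : q1.IsPrime) (h2 : q2.IsPrime)
    (hI : I ≤ q0) (h01 : q0 < q1) (h12 : q1 < q2) :
    (2 : WithBot (WithTop ℕ)) ≤ ringKrullDim (R ⧸ I) := by
  classical
  set mk := Ideal.Quotient.mk I
  have hsurj : Function.Surjective mk := Ideal.Quotient.mk_surjective
  have hker : RingHom.ker mk = I := Ideal.mk_ker
  have hk0 : RingHom.ker mk ≤ q0 := hker.le.trans hI
  have hk1 : RingHom.ker mk ≤ q1 := hk0.trans h01.le
  have hk2 : RingHom.ker mk ≤ q2 := hk1.trans h12.le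
  have hmaplt : ∀ a b : Ideal R, RingHom.ker mk ≤ a → a < b →
      Ideal.map mk a < Ideal.map mk b := by
    intro a b hka hab
    refine lt_of_le_of_ne (Ideal.map_mono hab.le) fun he => ?_
    have hc : Ideal.comap mk (Ideal.map mk a) = Ideal.comap mk (Ideal.map mk b) := by rw [he]
    rw [Ideal.comap_map_of_surjective mk hsurj, Ideal.comap_map_of_surjective mk hsurj,
      ← RingHom.ker_eq_comap_bot, sup_eq_left.mpr hka,
      sup_eq_left.mpr ((hka.trans hab.le))] at hc
    exact hab.ne hc
  haveI := h0; haveI := h1; haveI := h2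
  have hp0 : (Ideal.map mk q0).IsPrime := Ideal.map_isPrime_of_surjective hsurj hk0
  have hp1 : (Ideal.map mk q1).IsPrime := Ideal.map_isPrime_of_surjective hsurj hk1
  have hp2 : (Ideal.map mk q2).IsPrime := Ideal.map_isPrime_of_surjective hsurj hk2
  let X0 : PrimeSpectrum (R ⧸ I) := ⟨Ideal.map mk q0, hp0⟩
  let X1 : PrimeSpectrum (R ⧸ I) := ⟨Ideal.map mk q1, hp1⟩
  let X2 : PrimeSpectrum (R ⧸ I) := ⟨Ideal.map mk q2, hp2⟩
  have hx01 : X0 < X1 := hmaplt _ _ hk0 h01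
  have hx12 : X1 < X2 := hmaplt _ _ hk1 h12
  let c : LTSeries (PrimeSpectrum (R ⧸ I)) :=
    ⟨2, ![X0, X1, X2], by
      intro i
      fin_cases i
      · exact hx01
      · exact hx12⟩
  have h := Order.LTSeries.length_le_krullDim c
  have hc2 : c.length = 2 := rfl
  rw [hc2] at h
  exact_mod_cast h

/-- The vanishing prime of a point. -/
def auxP (p : Projectivization K (Fin s → K)) : Ideal (MvPolynomial (Fin s) K) :=
  RingHom.ker (auxPsi p.rep)

lemma auxP_isPrime (p : Projectivization K (Fin s → K)) : (auxP p).IsPrime :=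
  RingHom.ker_isPrime _

lemma aux_I_le_P {Y : Set (Projectivization K (Fin s → K))}
    {p : Projectivization K (Fin s → K)} (hp : p ∈ Y) :
    projVanishingIdeal Y ≤ auxP p := by
  rw [projVanishingIdeal, Ideal.span_le]
  rintro g ⟨⟨n, hn⟩, hvan⟩
  have h0 : eval p.rep g = 0 :=
    hvan p.rep p.rep_nonzero (by rw [Projectivization.mk_rep]; exact hp)
  show auxPsi p.rep g = 0
  rw [auxPsi_homog hn, h0, map_zero, zero_mul]

lemma aux_P_lt_m (p : Projectivization K (Fin s → K)) :
    auxP p < RingHom.ker (eval (0 : Fin s → K)) := by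
  have hle : auxP p ≤ RingHom.ker (eval (0 : Fin s → K)) := by
    intro f hf
    have hcomp : (Polynomial.evalRingHom (0 : K)).comp (auxPsi p.rep)
        = eval (0 : Fin s → K) := by
      apply MvPolynomial.ringHom_ext
      · intro r
        simp [auxPsi]
      · intro i
        simp [auxPsi]
    have : eval (0 : Fin s → K) f = (Polynomial.evalRingHom (0 : K)) (auxPsi p.rep f) := by
      rw [← hcomp]; rfl
    show eval (0 : Fin s → K) f = 0
    rw [this, (show auxPsi p.rep f = 0 from hf), map_zero]
  refine lt_of_le_of_ne hle fun he => ?_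
  obtain ⟨j, hj⟩ := Function.ne_iff.mp p.rep_nonzero
  have hj : p.rep j ≠ 0 := hj
  have hXm : X j ∈ RingHom.ker (eval (0 : Fin s → K)) := by
    show eval (0 : Fin s → K) (X j) = 0
    simp
  rw [← he] at hXm
  have : auxPsi p.rep (X j) = Polynomial.C (p.rep j) * Polynomial.X := by
    simp [auxPsi]
  have h0 : auxPsi p.rep (X j) = 0 := hXm
  rw [this] at h0
  exact (mul_ne_zero (Polynomial.C_ne_zero.mpr hj) Polynomial.X_ne_zero) h0

lemma aux_P_inj {p q : Projectivization K (Fin s → K)} (hpq : p ≠ q) : auxP p ≠ auxP q := by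
  obtain ⟨c, h1, h2⟩ := aux_sep q.rep_nonzero p.rep_nonzero (by
    rw [Projectivization.mk_rep, Projectivization.mk_rep]; exact fun h => hpq h.symm)
  intro he
  have hmem : auxL c ∈ auxP q := by
    show auxPsi q.rep (auxL c) = 0
    rw [auxPsi_homog (auxL_homog c), auxL_eval, h1, map_zero, zero_mul]
  rw [← he] at hmem
  have : auxPsi p.rep (auxL c) = 0 := hmem
  rw [auxPsi_homog (auxL_homog c), auxL_eval] at this
  exact (mul_ne_zero (Polynomial.C_ne_zero.mpr h2)
    (pow_ne_zero 1 Polynomial.X_ne_zero)) this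

lemma aux_finite {Y : Set (Projectivization K (Fin s → K))}
    (hdim : ringKrullDim (MvPolynomial (Fin s) K ⧸ projVanishingIdeal Y) = 1) :
    Y.Finite := by
  classical
  by_contra hinf
  set I := projVanishingIdeal Y with hI
  by_cases hP : ∃ p ∈ Y, auxP p ∉ I.minimalPrimes
  · obtain ⟨p, hpY, hpm⟩ := hP
    haveI := auxP_isPrime p
    obtain ⟨q0, hq0min, hq0le⟩ := Ideal.exists_minimalPrimes_le (aux_I_le_P hpY)
    haveI hq0p : q0.IsPrime := hq0min.1.1
    have hq0lt : q0 < auxP p := lt_of_le_of_ne hq0le (fun he => hpm (he ▸ hq0min))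
    have h2 := aux_chain hq0p (auxP_isPrime p) (RingHom.ker_isPrime _)
      hq0min.1.2 hq0lt (aux_P_lt_m p)
    rw [hdim] at h2
    have h3 : ((2:ℕ) : WithBot (WithTop ℕ)) ≤ ((1:ℕ) : WithBot (WithTop ℕ)) := h2
    norm_cast at h3
  · push_neg at hP
    apply hinf
    have hfin : I.minimalPrimes.Finite := by
      rw [Ideal.minimalPrimes_eq_comap]
      exact (minimalPrimes.finite_of_isNoetherianRing _).image _
    refine Set.Finite.of_finite_image (f := auxP) (hfin.subset ?_) ?_
    · rintro _ ⟨p, hp, rfl⟩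
      exact hP p hp
    · intro p hp q hq hpq
      by_contra hne
      exact aux_P_inj hne hpq

lemma aux_deg (a : Fin s →₀ ℕ) : ∑ i, a i = a.degree := by
  rw [Finsupp.degree]
  exact (Finset.sum_subset (Finset.subset_univ _)
    (fun i _ hi => Finsupp.notMem_support_iff.mp hi)).symm

lemma aux_one_ne_zero (hs : 0 < s) : (1 : Fin s → K) ≠ 0 :=
  Function.ne_iff.mpr ⟨⟨0, hs⟩, one_ne_zero⟩

lemma aux_chi_one_ne_zero (hs : 0 < s) (a : Fin s →₀ ℕ) :
    (∏ i, (Projectivization.mk K (1 : Fin s → K) (aux_one_ne_zero hs)).rep i ^ a i) ≠ 0 := by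
  set e := Projectivization.mk K (1 : Fin s → K) (aux_one_ne_zero hs) with he
  obtain ⟨u, hu⟩ := (Projectivization.mk_eq_mk_iff' K e.rep 1 e.rep_nonzero
    (aux_one_ne_zero hs)).mp (by rw [Projectivization.mk_rep])
  have hu0 : u ≠ 0 := by
    intro h; apply e.rep_nonzero; rw [← hu, h, zero_smul]
  refine Finset.prod_ne_zero_iff.mpr fun i _ => pow_ne_zero _ ?_
  rw [← hu]
  simpa using hu0

lemma aux_indep {Y : Set (Projectivization K (Fin s → K))} (hs : 0 < s)
    (hmon : IsProjSubmonoid Y) :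
    ∀ (N : ℕ) (T : Finset (Fin s →₀ ℕ)) (n : ℕ) (c : (Fin s →₀ ℕ) → K),
    T.card ≤ N →
    (∀ a ∈ T, a.degree = n) →
    (∀ a ∈ T, ∀ b ∈ T, a ≠ b → ∃ p ∈ Y, (∏ i, p.rep i ^ a i) ≠ (∏ i, p.rep i ^ b i)) →
    (∀ p ∈ Y, ∑ a ∈ T, c a * ∏ i, p.rep i ^ a i = 0) →
    ∀ a ∈ T, c a = 0 := by
  classical
  intro N
  induction N with
  | zero =>
    intro T n c hcard _ _ _ a ha
    rw [Finset.card_eq_zero.mp (Nat.le_zero.mp hcard)] at ha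
    exact absurd ha (Finset.notMem_empty a)
  | succ N ih =>
    intro T n c hcard hdeg hdist hvan a₁ ha₁
    set e := Projectivization.mk K (1 : Fin s → K) (aux_one_ne_zero hs) with he
    have heY : e ∈ Y := hmon.1 _
    by_cases hone : ∀ b ∈ T, b = a₁
    · have hT : T = {a₁} := by
        apply Finset.eq_singleton_iff_unique_mem.mpr
        exact ⟨ha₁, hone⟩
      have := hvan e heY
      rw [hT, Finset.sum_singleton] at this
      exact (mul_eq_zero.mp this).resolve_right (aux_chi_one_ne_zero hs a₁)
    · push_neg at hone
      obtain ⟨a₂, ha₂, hne21⟩ := hone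
      have hne12 : a₁ ≠ a₂ := fun h => hne21 h.symm
      have hn1 : 1 ≤ n := by
        by_contra hn
        have h0 : n = 0 := by omega
        have h1 : a₁ = 0 := (Finsupp.degree_eq_zero_iff _).mp (by rw [hdeg a₁ ha₁, h0])
        have h2 : a₂ = 0 := (Finsupp.degree_eq_zero_iff _).mp (by rw [hdeg a₂ ha₂, h0])
        exact hne12 (h1.trans h2.symm)
      obtain ⟨p, hpY, hpne⟩ := hdist a₁ ha₁ a₂ ha₂ hne12
      have hkey : ∀ q ∈ Y,
          ∑ a ∈ T, (c a * ∏ i, p.rep i ^ a i) * ∏ i, q.rep i ^ a i = 0 := by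
        intro q hqY
        have hmul : ∀ a : Fin s →₀ ℕ,
            (∏ i, p.rep i ^ a i) * (∏ i, q.rep i ^ a i)
              = ∏ i, (p.rep * q.rep) i ^ a i := by
          intro a
          rw [← Finset.prod_mul_distrib]
          exact Finset.prod_congr rfl fun i _ => by simp [mul_pow]
        by_cases h0 : p.rep * q.rep = 0
        · refine Finset.sum_eq_zero fun a ha => ?_
          have hz : (∏ i, (p.rep * q.rep) i ^ a i) = 0 := by
            obtain ⟨i, hi⟩ : ∃ i, a i ≠ 0 := by
              by_contra hno
              push_neg at hno
              have ha0 : a = 0 := Finsupp.ext fun i => hno i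
              have hd := hdeg a ha
              rw [ha0, map_zero] at hd
              omega
            refine Finset.prod_eq_zero (Finset.mem_univ i) ?_
            rw [h0]
            simp [zero_pow hi]
          rw [mul_assoc, hmul, hz, mul_zero]
        · have hpm : Projectivization.mk K p.rep p.rep_nonzero ∈ Y := by
            rw [Projectivization.mk_rep]; exact hpY
          have hqm : Projectivization.mk K q.rep q.rep_nonzero ∈ Y := by
            rw [Projectivization.mk_rep]; exact hqY
          have hrY := hmon.2 p.rep q.rep p.rep_nonzero q.rep_nonzero hpm hqm h0
          set r := Projectivization.mk K (p.rep * q.rep) h0 with hr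
          obtain ⟨u, hu⟩ := (Projectivization.mk_eq_mk_iff' K (p.rep * q.rep) r.rep h0
            r.rep_nonzero).mp (by rw [Projectivization.mk_rep])
          have hu0 : u ≠ 0 := fun h => h0 (by rw [← hu, h, zero_smul])
          have hterm : ∀ a ∈ T,
              (∏ i, (p.rep * q.rep) i ^ a i) = u ^ n * ∏ i, r.rep i ^ a i := by
            intro a ha
            rw [← hu]
            calc ∏ i, (u • r.rep) i ^ a i
                = ∏ i, u ^ a i * r.rep i ^ a i := by
                  exact Finset.prod_congr rfl fun i _ => by simp [mul_pow]
              _ = (∏ i, u ^ a i) * ∏ i, r.rep i ^ a i := Finset.prod_mul_distrib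
              _ = u ^ n * ∏ i, r.rep i ^ a i := by
                  rw [Finset.prod_pow_eq_pow_sum, aux_deg, hdeg a ha]
          calc ∑ a ∈ T, (c a * ∏ i, p.rep i ^ a i) * ∏ i, q.rep i ^ a i
              = ∑ a ∈ T, u ^ n * (c a * ∏ i, r.rep i ^ a i) := by
                refine Finset.sum_congr rfl fun a ha => ?_
                rw [mul_assoc, hmul, hterm a ha]; ring
            _ = u ^ n * ∑ a ∈ T, c a * ∏ i, r.rep i ^ a i := by rw [← Finset.mul_sum]
            _ = 0 := by rw [hvan r hrY, mul_zero]
      set c' : (Fin s →₀ ℕ) → K :=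
        fun a => c a * ((∏ i, p.rep i ^ a i) - (∏ i, p.rep i ^ a₂ i)) with hc'
      have hvan' : ∀ q ∈ Y, ∑ a ∈ T.erase a₂, c' a * ∏ i, q.rep i ^ a i = 0 := by
        intro q hqY
        have hz2 : c' a₂ * ∏ i, q.rep i ^ a₂ i = 0 := by
          simp [hc', sub_self]
        rw [Finset.sum_erase (f := fun a => c' a * ∏ i, q.rep i ^ a i) T hz2]
        have h1 := hkey q hqY
        have h2 := hvan q hqY
        calc ∑ a ∈ T, c' a * ∏ i, q.rep i ^ a i
            = (∑ a ∈ T, (c a * ∏ i, p.rep i ^ a i) * ∏ i, q.rep i ^ a i)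
              - (∏ i, p.rep i ^ a₂ i) * ∑ a ∈ T, c a * ∏ i, q.rep i ^ a i := by
              rw [Finset.mul_sum, ← Finset.sum_sub_distrib]
              exact Finset.sum_congr rfl fun a _ => by rw [hc']; ring
          _ = 0 := by rw [h1, h2, mul_zero, sub_zero]
      have hcard' : (T.erase a₂).card ≤ N := by
        have := Finset.card_erase_of_mem ha₂
        omega
      have hall := ih (T.erase a₂) n c' hcard'
        (fun a ha => hdeg a (Finset.mem_of_mem_erase ha))
        (fun a ha b hb hab => hdist a (Finset.mem_of_mem_erase ha)
          b (Finset.mem_of_mem_erase hb) hab)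
        hvan'
      have h1mem : a₁ ∈ T.erase a₂ := Finset.mem_erase.mpr ⟨hne12, ha₁⟩
      have := hall a₁ h1mem
      rw [hc'] at this
      exact (mul_eq_zero.mp this).resolve_right (sub_ne_zero.mpr hpne)

lemma aux_supp_deg {f : MvPolynomial (Fin s) K} {n : ℕ} (hf : f.IsHomogeneous n)
    {d : Fin s →₀ ℕ} (hd : d ∈ f.support) : d.degree = n := by
  by_contra h
  exact mem_support_iff.mp hd (hf.coeff_eq_zero h)

/-- The candidate binomial generating set. -/
def auxB (Y : Set (Projectivization K (Fin s → K))) : Set (MvPolynomial (Fin s) K) :=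
  {g | ∃ a b : Fin s →₀ ℕ, g = monomial a 1 - monomial b 1 ∧ a.degree = b.degree ∧
    ∀ p ∈ Y, (∏ i, p.rep i ^ a i) = (∏ i, p.rep i ^ b i)}

lemma aux_span {Y : Set (Projectivization K (Fin s → K))} (hs : 0 < s)
    (hmon : IsProjSubmonoid Y) :
    ∀ (N : ℕ) (f : MvPolynomial (Fin s) K), f.support.card ≤ N →
    ∀ n : ℕ, f.IsHomogeneous n → (∀ p ∈ Y, eval p.rep f = 0) →
    f ∈ Ideal.span (auxB Y) := by
  classical
  intro N
  induction N with
  | zero =>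
    intro f hcard n hf hvan
    have : f.support = ∅ := Finset.card_eq_zero.mp (Nat.le_zero.mp hcard)
    rw [MvPolynomial.support_eq_empty.mp this]
    exact Ideal.zero_mem _
  | succ N ih =>
    intro f hcard n hf hvan
    by_cases hinj : ∀ a ∈ f.support, ∀ b ∈ f.support, a ≠ b →
        ∃ p ∈ Y, (∏ i, p.rep i ^ a i) ≠ (∏ i, p.rep i ^ b i)
    · have hzero := aux_indep hs hmon (N + 1) f.support n (fun a => coeff a f) hcard
        (fun a ha => aux_supp_deg hf ha) hinj
        (fun p hp => by rw [← eval_eq']; exact hvan p hp)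
      have : f = 0 := by
        by_contra hfz
        obtain ⟨d, hd⟩ := Finset.nonempty_iff_ne_empty.mpr
          (fun h => hfz (MvPolynomial.support_eq_empty.mp h))
        exact mem_support_iff.mp hd (hzero d hd)
      rw [this]; exact Ideal.zero_mem _
    · push_neg at hinj
      obtain ⟨a₂, h2, a₁, h1, hne, hchieq⟩ := hinj
      set g : MvPolynomial (Fin s) K :=
        C (coeff a₂ f) * (monomial a₂ 1 - monomial a₁ 1) with hg
      have hgB : (monomial a₂ (1 : K) - monomial a₁ 1) ∈ auxB Y :=
        ⟨a₂, a₁, rfl, by rw [aux_supp_deg hf h2, aux_supp_deg hf h1], hchieq⟩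
      have hgspan : g ∈ Ideal.span (auxB Y) :=
        Ideal.mul_mem_left _ _ (Ideal.subset_span hgB)
      set f' := f - g with hf'
      have hcoeff : ∀ d, coeff d f' = coeff d f -
          coeff a₂ f * ((if a₂ = d then (1:K) else 0) - (if a₁ = d then 1 else 0)) := by
        intro d
        simp [hf', hg, coeff_monomial, mul_sub]
      have hsub : f'.support ⊆ f.support.erase a₂ := by
        intro d hd
        have hd' := mem_support_iff.mp hd
        rw [hcoeff d] at hd'
        rcases eq_or_ne d a₂ with rfl | hda2
        · rw [if_pos rfl, if_neg (fun h => hne h.symm)] at hd'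
          simp at hd'
        · refine Finset.mem_erase.mpr ⟨hda2, ?_⟩
          rcases eq_or_ne d a₁ with rfl | hda1
          · exact h1
          · rw [if_neg (fun h => hda2 h.symm), if_neg (fun h => hda1 h.symm)] at hd'
            simp only [sub_zero, mul_zero, sub_zero] at hd'
            exact mem_support_iff.mpr hd'
      have hcard' : f'.support.card ≤ N := by
        have h1c := Finset.card_le_card hsub
        have h2c := Finset.card_erase_of_mem h2
        have h3c : 1 ≤ f.support.card := Finset.card_pos.mpr ⟨a₂, h2⟩
        omega
      have hghom : g.IsHomogeneous n := by
        have : (monomial a₂ (1:K) - monomial a₁ 1).IsHomogeneous n :=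
          (isHomogeneous_monomial _ (aux_supp_deg hf h2)).sub
            (isHomogeneous_monomial _ (aux_supp_deg hf h1))
        simpa using this.C_mul (coeff a₂ f)
      have hf'hom : f'.IsHomogeneous n := hf.sub hghom
      have hvan' : ∀ p ∈ Y, eval p.rep f' = 0 := by
        intro p hp
        rw [hf', map_sub, hvan p hp, hg, map_mul, eval_C, map_sub,
          aux_eval_monomial_one, aux_eval_monomial_one, hchieq p hp]
        ring
      have := ih f' hcard' n hf'hom hvan'
      have hfeq : f = f' + g := by rw [hf']; ring
      rw [hfeq]
      exact Ideal.add_mem _ this hgspan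

theorem dim_one_binomial_iff_monoid (hs : 0 < s)
    (Y : Set (Projectivization K (Fin s → K)))
    (hdim : ringKrullDim (MvPolynomial (Fin s) K ⧸ projVanishingIdeal Y) = 1) :
    IsBinomialIdeal (projVanishingIdeal Y) ↔ IsProjSubmonoid Y := by
  constructor
  · intro hbin
    obtain ⟨B, hBbin, hBspan⟩ := hbin
    have hfin : Y.Finite := aux_finite hdim
    constructor
    · intro h1
      by_contra hnot
      obtain ⟨f, hfhom, hfvan, hfne⟩ := aux_nss hfin h1 hnot
      have hfI : f ∈ projVanishingIdeal Y := Ideal.subset_span ⟨hfhom, hfvan⟩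
      have hle : projVanishingIdeal Y ≤ RingHom.ker (eval (1 : Fin s → K)) := by
        rw [hBspan, Ideal.span_le]
        intro g hg
        obtain ⟨a, b, rfl⟩ := hBbin g hg
        show eval (1 : Fin s → K) _ = 0
        rw [map_sub, aux_eval_monomial_one, aux_eval_monomial_one]
        simp
      exact hfne (hle hfI)
    · intro α β hα hβ hmemα hmemβ hab
      by_contra hnot
      obtain ⟨f, hfhom, hfvan, hfne⟩ := aux_nss hfin hab hnot
      have hfI : f ∈ projVanishingIdeal Y := Ideal.subset_span ⟨hfhom, hfvan⟩
      have hle : projVanishingIdeal Y ≤ RingHom.ker (eval (α * β)) := by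
        rw [hBspan, Ideal.span_le]
        intro g hg
        obtain ⟨a, b, rfl⟩ := hBbin g hg
        have hgI : (monomial a (1:K) - monomial b 1) ∈ projVanishingIdeal Y := by
          rw [hBspan]; exact Ideal.subset_span hg
        have h1 := aux_vanish hα hmemα _ hgI
        have h2 := aux_vanish hβ hmemβ _ hgI
        rw [map_sub, sub_eq_zero] at h1 h2
        show eval (α * β) _ = 0
        rw [map_sub, aux_eval_monomial_mul, aux_eval_monomial_mul, h1, h2, sub_self]
      exact hfne (hle hfI)
  · intro hmon
    refine ⟨auxB Y, ?_, ?_⟩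
    · rintro g ⟨a, b, rfl, -, -⟩
      exact ⟨a, b, rfl⟩
    · refine le_antisymm ?_ ?_
      · rw [projVanishingIdeal, Ideal.span_le]
        rintro f ⟨⟨n, hn⟩, hvan⟩
        exact aux_span hs hmon f.support.card f le_rfl n hn
          (fun p hp => hvan p.rep p.rep_nonzero (by rw [Projectivization.mk_rep]; exact hp))
      · rw [Ideal.span_le]
        rintro g ⟨a, b, rfl, hdeg, hchi⟩
        refine SetLike.mem_coe.mpr (Ideal.subset_span ?_)
        refine ⟨⟨a.degree, (isHomogeneous_monomial _ rfl).sub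
          (isHomogeneous_monomial _ hdeg.symm)⟩, ?_⟩
        intro α hα hmem
        set p := Projectivization.mk K α hα with hp
        obtain ⟨t, ht⟩ := (Projectivization.mk_eq_mk_iff' K α p.rep hα p.rep_nonzero).mp
          (by rw [Projectivization.mk_rep])
        rw [map_sub, ← ht,
          aux_eval_smul (isHomogeneous_monomial _ rfl) t p.rep,
          aux_eval_smul (isHomogeneous_monomial _ hdeg.symm) t p.rep,
          aux_eval_monomial_one, aux_eval_monomial_one, hchi p hmem]
        ring
end
end
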